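/- arXiv:0807.4101 — 3 statements merged into one kernel-verified Lean document; each statement's English description precedes it below -/
import Mathlib

section
/- For the 2×2 Gram matrix ((δ_L, κ_{LR}),(κ_{LR}, δ_R·κ_{LR})), the determinant equals κ_{LR}(δ_L δ_R − κ_{LR}); with the good parametrisation δ_L = [w_1], δ_R = [w_2], κ_{LR} = −[(w_1−w_2+θ)/2][(w_1−w_2−θ)/2], this determinant equals −[(w_1−w_2+θ)/2]·[(w_1−w_2−θ)/2]·[(w_1+w_2+θ)/2]·[(w_1+w_2−θ)/2]. -/
/-- The quantum integer `[n] = (q^n - q^{-n})/(q - q⁻¹)`. -/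
noncomputable def qint {k : Type*} [Field k] (q : k) (n : ℤ) : k :=
  (q ^ n - q ^ (-n)) / (q - q⁻¹)

lemma qint_key {k : Type*} [Field k] (q : k) (hq : q ≠ 0) (hd : q - q⁻¹ ≠ 0)
    (m w₂ θ : ℤ) :
    qint q (m + m + w₂ - θ) * qint q w₂ + qint q m * qint q (m - θ) =
      qint q (m + w₂) * qint q (m + w₂ - θ) := by
  have key : ∀ a b : ℤ, qint q a * qint q b =
      ((q ^ a - q ^ (-a)) * (q ^ b - q ^ (-b))) / (q - q⁻¹) ^ 2 := by
    intro a b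
    rw [qint, qint, div_mul_div_comm, sq]
  have expand : ∀ a b : ℤ, (q ^ a - q ^ (-a)) * (q ^ b - q ^ (-b)) =
      q ^ (a + b) + q ^ (-(a + b)) - q ^ (a - b) - q ^ (-(a - b)) := by
    intro a b
    rw [sub_mul, mul_sub, mul_sub, ← zpow_add₀ hq a b, ← zpow_add₀ hq a (-b),
      ← zpow_add₀ hq (-a) b, ← zpow_add₀ hq (-a) (-b),
      show a + -b = a - b by ring, show -a + b = -(a - b) by ring,
      show -a + -b = -(a + b) by ring]
    ring
  rw [key, key, key, ← add_div]
  congr 1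
  rw [expand, expand, expand,
    show m + m + w₂ - θ + w₂ = m + w₂ + (m + w₂ - θ) by ring,
    show m + m + w₂ - θ - w₂ = m + (m - θ) by ring,
    show m - (m - θ) = m + w₂ - (m + w₂ - θ) by ring]
  ring

/-- The Gram determinant `Δ_2(0)` of `S_2(0)`: for the `2×2` Gram matrix
`((δ_L, κ_{LR}), (κ_{LR}, δ_R κ_{LR}))` the determinant equals
`κ_{LR}(δ_L δ_R − κ_{LR})`; and with the good parametrisation
`δ_L = [w₁]`, `δ_R = [w₂]`, `κ_{LR} = −[(w₁−w₂+θ)/2][(w₁−w₂−θ)/2]`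
it equals `−[(w₁−w₂+θ)/2][(w₁−w₂−θ)/2][(w₁+w₂+θ)/2][(w₁+w₂−θ)/2]`. -/
theorem gram_det_b2 {k : Type*} [Field k] (q : k) (hq : q ≠ 0) (hq2 : q ^ 2 ≠ 1)
    (w₁ w₂ θ : ℤ) (hpar : Even (w₁ - w₂ + θ)) :
    (Matrix.det !![qint q w₁, -(qint q ((w₁ - w₂ + θ) / 2) * qint q ((w₁ - w₂ - θ) / 2));
        -(qint q ((w₁ - w₂ + θ) / 2) * qint q ((w₁ - w₂ - θ) / 2)),
        qint q w₂ * -(qint q ((w₁ - w₂ + θ) / 2) * qint q ((w₁ - w₂ - θ) / 2))] =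
      -(qint q ((w₁ - w₂ + θ) / 2) * qint q ((w₁ - w₂ - θ) / 2)) *
        (qint q w₁ * qint q w₂ -
          -(qint q ((w₁ - w₂ + θ) / 2) * qint q ((w₁ - w₂ - θ) / 2)))) ∧
    Matrix.det !![qint q w₁, -(qint q ((w₁ - w₂ + θ) / 2) * qint q ((w₁ - w₂ - θ) / 2));
        -(qint q ((w₁ - w₂ + θ) / 2) * qint q ((w₁ - w₂ - θ) / 2)),
        qint q w₂ * -(qint q ((w₁ - w₂ + θ) / 2) * qint q ((w₁ - w₂ - θ) / 2))] =
      -(qint q ((w₁ - w₂ + θ) / 2) * qint q ((w₁ - w₂ - θ) / 2) *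
        qint q ((w₁ + w₂ + θ) / 2) * qint q ((w₁ + w₂ - θ) / 2)) := by
  have hd : q - q⁻¹ ≠ 0 := by
    intro h
    apply hq2
    have h1 : q = q⁻¹ := sub_eq_zero.mp h
    calc q ^ 2 = q * q := sq q
      _ = q * q⁻¹ := by rw [← h1]
      _ = 1 := mul_inv_cancel₀ hq
  obtain ⟨m, hm⟩ := hpar
  have e1 : (w₁ - w₂ + θ) / 2 = m := by omega
  have e2 : (w₁ - w₂ - θ) / 2 = m - θ := by omega
  have e3 : (w₁ + w₂ + θ) / 2 = m + w₂ := by omega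
  have e4 : (w₁ + w₂ - θ) / 2 = m + w₂ - θ := by omega
  have ew : w₁ = m + m + w₂ - θ := by omega
  rw [Matrix.det_fin_two_of, e1, e2, e3, e4, ew]
  constructor
  · ring
  · have := qint_key q hq hd m w₂ θ
    linear_combination (-(qint q m * qint q (m - θ))) * this
end

section
/- Let u = u_1 s u_2 s u_3 be a reduced word in the presented algebra A_n in which the two displayed occurrences of the generator s are consecutive (u_2 contains no s), and suppose every generator in u_2 not commuting with s equals a single generator t. Then u_2 contains exactly one occurrence of t, and s ∈ {E_0, E_n}. -/
open FreeAlgebra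

/-- The six parameters `δ, δ_L, δ_R, κ_L, κ_R, κ_{LR}` of the symplectic blob algebra. -/
structure Params (k : Type*) where
  δ : k
  δL : k
  δR : k
  κL : k
  κR : k
  κLR : k

/-- The word `I`: the product of the odd-indexed generators `E_1 E_3 ⋯`. -/
def Iword (n : ℕ) : List (Fin (n + 1)) :=
  (List.finRange (n + 1)).filter (fun i => i.val % 2 = 1)

/-- The word `J`: the product of the even-indexed generators `E_0 E_2 ⋯`. -/
def Jword (n : ℕ) : List (Fin (n + 1)) :=
  (List.finRange (n + 1)).filter (fun i => i.val % 2 = 0)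

/-- The monomial in the free algebra corresponding to a word in the generators. -/
def wordProd (k : Type*) [CommRing k] {n : ℕ} (u : List (Fin (n + 1))) :
    FreeAlgebra k (Fin (n + 1)) :=
  (u.map (FreeAlgebra.ι k)).prod

/-- The defining relations of the algebra `A_n` (the quotient of the two boundary
Temperley–Lieb algebra by the topological relations `IJI = κ_{LR} I`, `JIJ = κ_{LR} J`),
with `E = E_0` and `F = E_n`. -/
inductive SBRel {k : Type*} [CommRing k] {n : ℕ} (p : Params k) :
    FreeAlgebra k (Fin (n + 1)) → FreeAlgebra k (Fin (n + 1)) → Prop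
  | comm (i j : Fin (n + 1)) (h : i.val + 1 < j.val) :
      SBRel p (ι k i * ι k j) (ι k j * ι k i)
  | left_sq :
      SBRel p (ι k (0 : Fin (n + 1)) * ι k 0) (p.δL • ι k (0 : Fin (n + 1)))
  | right_sq :
      SBRel p (ι k (Fin.last n) * ι k (Fin.last n)) (p.δR • ι k (Fin.last n))
  | mid_sq (i : Fin (n + 1)) (h1 : 1 ≤ i.val) (h2 : i.val < n) :
      SBRel p (ι k i * ι k i) (p.δ • ι k i)
  | left_braid (i j : Fin (n + 1)) (hi : i.val = 1) (hj : j.val = 0) :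
      SBRel p (ι k i * ι k j * ι k i) (p.κL • ι k i)
  | right_braid (i j : Fin (n + 1)) (hi : i.val + 1 = n) (hj : j.val = n) :
      SBRel p (ι k i * ι k j * ι k i) (p.κR • ι k i)
  | braid_up (i j : Fin (n + 1)) (h : i.val + 1 = j.val) (h1 : 1 ≤ i.val) (h2 : j.val < n) :
      SBRel p (ι k i * ι k j * ι k i) (ι k i)
  | braid_down (i j : Fin (n + 1)) (h : i.val + 1 = j.val) (h1 : 1 ≤ i.val) (h2 : j.val < n) :
      SBRel p (ι k j * ι k i * ι k j) (ι k j)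
  | topI :
      SBRel p (wordProd k (Iword n ++ Jword n ++ Iword n)) (p.κLR • wordProd k (Iword n))
  | topJ :
      SBRel p (wordProd k (Jword n ++ Iword n ++ Jword n)) (p.κLR • wordProd k (Jword n))

/-- The presented algebra `A_n`. -/
def SBAlg (k : Type*) [CommRing k] (n : ℕ) (p : Params k) :=
  RingQuot (SBRel (k := k) (n := n) p)

noncomputable instance (k : Type*) [CommRing k] (n : ℕ) (p : Params k) :
    Ring (SBAlg k n p) := inferInstanceAs (Ring (RingQuot (SBRel p)))

noncomputable instance (k : Type*) [CommRing k] (n : ℕ) (p : Params k) :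
    Algebra k (SBAlg k n p) := inferInstanceAs (Algebra k (RingQuot (SBRel p)))

/-- The image of a word in the generators in the algebra `A_n`. -/
noncomputable def algWord {k : Type*} [CommRing k] {n : ℕ} (p : Params k)
    (u : List (Fin (n + 1))) : SBAlg k n p :=
  RingQuot.mkAlgHom k (SBRel p) (wordProd k u)

/-- The generator `E_i` of `A_n`. -/
noncomputable def gen {k : Type*} [CommRing k] {n : ℕ} (p : Params k) (i : Fin (n + 1)) :
    SBAlg k n p :=
  RingQuot.mkAlgHom k (SBRel p) (ι k i)

/-- A monomial `u` in the generators is *reduced* if it cannot be expressed, using the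
relations, as a scalar multiple of a strictly shorter monomial. -/
def Reduced {k : Type*} [CommRing k] {n : ℕ} (p : Params k) (u : List (Fin (n + 1))) :
    Prop :=
  ∀ (v : List (Fin (n + 1))) (c : k), v.length < u.length → algWord p u ≠ c • algWord p v

/-- The generators `E_i` and `E_j` do not commute: `|i - j| = 1`. -/
def Adj {n : ℕ} (i j : Fin (n + 1)) : Prop :=
  i.val + 1 = j.val ∨ j.val + 1 = i.val

section Auxiliary

variable {k : Type*} [CommRing k] {n : ℕ} (p : Params k)

lemma adj_comm {i j : Fin (n + 1)} : Adj i j ↔ Adj j i := by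
  unfold Adj; exact or_comm

lemma algWord_nil : algWord p ([] : List (Fin (n + 1))) = 1 := by
  simp [algWord, wordProd]; rfl

lemma algWord_append (u v : List (Fin (n + 1))) :
    algWord p (u ++ v) = algWord p u * algWord p v := by
  simp [algWord, wordProd, List.map_append, List.prod_append, map_mul]; rfl

lemma algWord_cons (i : Fin (n + 1)) (u : List (Fin (n + 1))) :
    algWord p (i :: u) = gen p i * algWord p u := by
  simp [algWord, wordProd, gen, map_mul]; rfl

lemma gen_sq (s : Fin (n + 1)) : ∃ c : k, gen p s * gen p s = c • gen p s := by
  have hm : gen p s * gen p s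
      = RingQuot.mkAlgHom k (SBRel p) (ι k s * ι k s) := (map_mul _ _ _).symm
  by_cases h0 : s = 0
  · refine ⟨p.δL, ?_⟩
    subst h0
    rw [hm, RingQuot.mkAlgHom_rel k SBRel.left_sq, map_smul]
    rfl
  by_cases hl : s = Fin.last n
  · refine ⟨p.δR, ?_⟩
    subst hl
    rw [hm, RingQuot.mkAlgHom_rel k SBRel.right_sq, map_smul]
    rfl
  · refine ⟨p.δ, ?_⟩
    have h1 : 1 ≤ s.val := by
      rcases Nat.eq_zero_or_pos s.val with h | h
      · exact absurd (Fin.ext (by simpa using h)) h0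
      · exact h
    have h2 : s.val < n := by
      have := s.isLt
      rcases Nat.lt_or_ge s.val n with h | h
      · exact h
      · exact absurd (Fin.ext (by simp [Fin.val_last]; omega)) hl
    rw [hm, RingQuot.mkAlgHom_rel k (SBRel.mid_sq s h1 h2), map_smul]
    rfl

lemma gen_braid (s t : Fin (n + 1)) (h1 : 1 ≤ s.val) (h2 : s.val < n) (hst : Adj s t) :
    ∃ c : k, gen p s * gen p t * gen p s = c • gen p s := by
  have hm : gen p s * gen p t * gen p s
      = RingQuot.mkAlgHom k (SBRel p) (ι k s * ι k t * ι k s) := by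
    simp [gen, map_mul]; rfl
  rcases hst with h | h
  · by_cases ht : t.val = n
    · exact ⟨p.κR, by rw [hm,
        RingQuot.mkAlgHom_rel k (SBRel.right_braid s t (by omega) ht), map_smul]; rfl⟩
    · have htn : t.val < n := by have := t.isLt; omega
      exact ⟨1, by rw [hm,
        RingQuot.mkAlgHom_rel k (SBRel.braid_up s t h h1 htn), one_smul]; rfl⟩
  · by_cases ht : t.val = 0
    · exact ⟨p.κL, by rw [hm,
        RingQuot.mkAlgHom_rel k (SBRel.left_braid s t (by omega) ht), map_smul]; rfl⟩
    · exact ⟨1, by rw [hm,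
        RingQuot.mkAlgHom_rel k (SBRel.braid_down t s h (by omega) h2), one_smul]; rfl⟩

lemma gen_comm {i j : Fin (n + 1)} (hne : i ≠ j) (hadj : ¬ Adj i j) :
    gen p i * gen p j = gen p j * gen p i := by
  have hij : i.val ≠ j.val := fun h => hne (Fin.ext h)
  unfold Adj at hadj
  push_neg at hadj
  have e1 : gen p i * gen p j
      = RingQuot.mkAlgHom k (SBRel p) (ι k i * ι k j) := (map_mul _ _ _).symm
  have e2 : gen p j * gen p i
      = RingQuot.mkAlgHom k (SBRel p) (ι k j * ι k i) := (map_mul _ _ _).symm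
  rcases Nat.lt_or_ge i.val j.val with h | h
  · rw [e1, e2, RingQuot.mkAlgHom_rel k (SBRel.comm i j (by omega))]
  · rw [e1, e2, ← RingQuot.mkAlgHom_rel k (SBRel.comm j i (by omega))]

lemma gen_word_comm (s : Fin (n + 1)) (w : List (Fin (n + 1)))
    (hw : ∀ g ∈ w, g ≠ s ∧ ¬ Adj g s) :
    gen p s * algWord p w = algWord p w * gen p s := by
  induction w with
  | nil => simp [algWord_nil]
  | cons a w ih =>
    have ha := hw a (by simp)
    have hcomm : gen p s * gen p a = gen p a * gen p s :=
      gen_comm p (fun h => ha.1 h.symm) (fun h => ha.2 (adj_comm.mp h))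
    rw [algWord_cons, ← mul_assoc, hcomm, mul_assoc,
      ih (fun g hg => hw g (by simp [hg])), ← mul_assoc]

lemma not_reduced_sq (x y w : List (Fin (n + 1))) (s : Fin (n + 1))
    (hw : ∀ g ∈ w, g ≠ s ∧ ¬ Adj g s) :
    ¬ Reduced p (x ++ s :: (w ++ s :: y)) := by
  intro hred
  obtain ⟨c, hc⟩ := gen_sq p s
  refine hred (x ++ (w ++ s :: y)) c
    (by simp only [List.length_append, List.length_cons]; omega) ?_
  have e1 : algWord p (x ++ s :: (w ++ s :: y))
      = algWord p x * (gen p s * (algWord p w * (gen p s * algWord p y))) := by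
    simp [algWord_append, algWord_cons, mul_assoc]
  have e2 : algWord p (x ++ (w ++ s :: y))
      = algWord p x * (algWord p w * (gen p s * algWord p y)) := by
    simp [algWord_append, algWord_cons, mul_assoc]
  rw [e1, e2, ← mul_assoc (gen p s) (algWord p w), gen_word_comm p s w hw,
    mul_assoc, ← mul_assoc (gen p s) (gen p s), hc, smul_mul_assoc,
    mul_smul_comm, mul_smul_comm]

lemma not_reduced_braid (x y a b : List (Fin (n + 1))) (s t : Fin (n + 1))
    (h1 : 1 ≤ s.val) (h2 : s.val < n) (hst : Adj s t)
    (ha : ∀ g ∈ a, g ≠ s ∧ ¬ Adj g s) (hb : ∀ g ∈ b, g ≠ s ∧ ¬ Adj g s) :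
    ¬ Reduced p (x ++ s :: ((a ++ t :: b) ++ s :: y)) := by
  intro hred
  obtain ⟨c, hc⟩ := gen_braid p s t h1 h2 hst
  refine hred (x ++ (a ++ s :: (b ++ y))) c
    (by simp only [List.length_append, List.length_cons]; omega) ?_
  have e1 : algWord p (x ++ s :: ((a ++ t :: b) ++ s :: y))
      = algWord p x * (gen p s * (algWord p a *
          (gen p t * (algWord p b * (gen p s * algWord p y))))) := by
    simp [algWord_append, algWord_cons, mul_assoc]
  have e2 : algWord p (x ++ (a ++ s :: (b ++ y)))
      = algWord p x * (algWord p a * (gen p s * (algWord p b * algWord p y))) := by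
    simp [algWord_append, algWord_cons, mul_assoc]
  rw [e1, e2, ← mul_assoc (gen p s) (algWord p a), gen_word_comm p s a ha,
    mul_assoc (algWord p a) (gen p s),
    ← mul_assoc (algWord p b) (gen p s), ← gen_word_comm p s b hb,
    mul_assoc (gen p s) (algWord p b) (algWord p y),
    ← mul_assoc (gen p s) (gen p t), ← mul_assoc (gen p s * gen p t) (gen p s), hc,
    smul_mul_assoc, mul_smul_comm, mul_smul_comm]

lemma exists_first_occ {α : Type*} [DecidableEq α] (t : α) (l : List α) (h : t ∈ l) :
    ∃ a b, l = a ++ t :: b ∧ t ∉ a := by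
  induction l with
  | nil => simp at h
  | cons x xs ih =>
    by_cases hx : x = t
    · exact ⟨[], xs, by simp [hx], by simp⟩
    · have hxs : t ∈ xs := by
        rcases List.mem_cons.mp h with h' | h'
        · exact absurd h'.symm hx
        · exact h'
      obtain ⟨a, b, hab, hna⟩ := ih hxs
      exact ⟨x :: a, b, by simp [hab], by
        simp only [List.mem_cons]
        rintro (h' | h')
        · exact hx h'.symm
        · exact hna h'⟩

lemma main_aux (hn : 1 ≤ n) :
    ∀ m (u₁ u₂ u₃ : List (Fin (n + 1))) (s t : Fin (n + 1)),
      u₂.length ≤ m →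
      Reduced p (u₁ ++ s :: (u₂ ++ s :: u₃)) →
      s ∉ u₂ → Adj s t → (∀ g ∈ u₂, Adj g s → g = t) →
      u₂.count t = 1 ∧ (s = 0 ∨ s = Fin.last n) := by
  intro m
  induction m using Nat.strong_induction_on with
  | _ m ih =>
  intro u₁ u₂ u₃ s t hm hred hcons hst hall
  rcases hcnt : u₂.count t with _ | c
  · -- count = 0 : contradiction
    have ht2 : t ∉ u₂ := List.count_eq_zero.mp hcnt
    have hw : ∀ g ∈ u₂, g ≠ s ∧ ¬ Adj g s := by
      intro g hg
      refine ⟨fun h => hcons (h ▸ hg), fun hadj => ht2 ?_⟩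
      exact (hall g hg hadj) ▸ hg
    exact absurd hred (not_reduced_sq p u₁ u₃ u₂ s hw)
  rcases c with _ | c
  · -- count = 1
    refine ⟨rfl, ?_⟩
    by_contra hss
    push_neg at hss
    have h1 : 1 ≤ s.val := by
      rcases Nat.eq_zero_or_pos s.val with h | h
      · exact absurd (Fin.ext (by simpa using h)) hss.1
      · exact h
    have h2 : s.val < n := by
      have := s.isLt
      rcases Nat.lt_or_ge s.val n with h | h
      · exact h
      · exact absurd (Fin.ext (by simp [Fin.val_last]; omega)) hss.2
    have htmem : t ∈ u₂ := List.count_pos_iff.mp (by omega)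
    obtain ⟨a, b, hab, hna⟩ := exists_first_occ t u₂ htmem
    have hnb : t ∉ b := by
      intro hb
      have : 2 ≤ u₂.count t := by
        rw [hab]
        simp only [List.count_append, List.count_cons_self]
        have : 1 ≤ b.count t := List.count_pos_iff.mpr hb
        omega
      omega
    have hcond : ∀ (c' : List (Fin (n+1))), t ∉ c' → (∀ g ∈ c', g ∈ u₂) →
        ∀ g ∈ c', g ≠ s ∧ ¬ Adj g s := by
      intro c' hnc hsub g hg
      refine ⟨fun h => hcons (h ▸ hsub g hg), fun hadj => hnc ?_⟩
      exact (hall g (hsub g hg) hadj) ▸ hg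
    have hreda : Reduced p (u₁ ++ s :: ((a ++ t :: b) ++ s :: u₃)) := hab ▸ hred
    exact absurd hreda (not_reduced_braid p u₁ u₃ a b s t h1 h2 hst
      (hcond a hna (fun g hg => by rw [hab]; simp [hg]))
      (hcond b hnb (fun g hg => by rw [hab]; simp [hg])))
  · -- count ≥ 2 : contradiction
    exfalso
    have htmem : t ∈ u₂ := List.count_pos_iff.mp (by omega)
    obtain ⟨a, b, hab, hna⟩ := exists_first_occ t u₂ htmem
    have hbt : t ∈ b := by
      by_contra hb
      have : u₂.count t = 1 := by
        rw [hab]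
        simp [List.count_append, List.count_cons_self,
          List.count_eq_zero.mpr hna, List.count_eq_zero.mpr hb]
      omega
    obtain ⟨b₁, b₂, hb, hnb₁⟩ := exists_first_occ t b hbt
    have hu₂ : u₂ = a ++ t :: (b₁ ++ t :: b₂) := by rw [hab, hb]
    have hsub : ∀ g ∈ b₁, g ∈ u₂ := fun g hg => by rw [hu₂]; simp [hg]
    have hword : u₁ ++ s :: (u₂ ++ s :: u₃)
        = (u₁ ++ s :: a) ++ t :: (b₁ ++ t :: (b₂ ++ s :: u₃)) := by
      rw [hu₂]; simp
    have hred' : Reduced p ((u₁ ++ s :: a) ++ t :: (b₁ ++ t :: (b₂ ++ s :: u₃))) :=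
      hword ▸ hred
    by_cases hadj : ∃ g₀ ∈ b₁, Adj g₀ t
    · obtain ⟨g₀, hg₀, hadj₀⟩ := hadj
      have hg₀s : g₀ ≠ s := fun h => hcons (h ▸ hsub g₀ hg₀)
      have huniq : ∀ g ∈ b₁, Adj g t → g = g₀ := by
        intro g hg hA
        have hgs : g.val ≠ s.val := fun h =>
          hcons ((Fin.ext h : g = s) ▸ hsub g hg)
        have hg₀s' : g₀.val ≠ s.val := fun h => hg₀s (Fin.ext h)
        have : g.val = g₀.val := by
          rcases hA with h | h <;> rcases hadj₀ with h' | h' <;>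
            rcases hst with h'' | h'' <;> omega
        exact Fin.ext this
      have hlen : b₁.length < m := by
        have : u₂.length = a.length + 1 + (b₁.length + 1 + b₂.length) := by
          rw [hu₂]; simp; omega
        omega
      obtain ⟨_, hT⟩ := ih b₁.length hlen (u₁ ++ s :: a) b₁ (b₂ ++ s :: u₃) t g₀
        le_rfl hred' hnb₁ (adj_comm.mp hadj₀) huniq
      have hg₀lt := g₀.isLt
      have hslt := s.isLt
      rcases hT with h0 | hl
      · have ht0 : t.val = 0 := by rw [h0]; rfl
        have : g₀.val = s.val := by
          rcases hadj₀ with h | h <;> rcases hst with h' | h' <;> omega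
        exact hg₀s (Fin.ext this)
      · have htn : t.val = n := by rw [hl]; exact Fin.val_last n
        have : g₀.val = s.val := by
          rcases hadj₀ with h | h <;> rcases hst with h' | h' <;> omega
        exact hg₀s (Fin.ext this)
    · push_neg at hadj
      have hw : ∀ g ∈ b₁, g ≠ t ∧ ¬ Adj g t := fun g hg =>
        ⟨fun h => hnb₁ (h ▸ hg), hadj g hg⟩
      exact absurd hred' (not_reduced_sq p (u₁ ++ s :: a) (b₂ ++ s :: u₃) b₁ t hw)

end Auxiliary

/-- Lemma: let `u = u₁ s u₂ s u₃` be a reduced word in which the displayed occurrences of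
the generator `s` are consecutive, and suppose every generator in `u₂` not commuting
with `s` is of the same type `t`.  Then `u₂` contains only one occurrence of `t`, and
`s ∈ {E_0, E_n}`. -/
theorem consecutive_occurrences {k : Type*} [Field k] {n : ℕ} (hn : 1 ≤ n) (p : Params k)
    (u₁ u₂ u₃ : List (Fin (n + 1))) (s t : Fin (n + 1))
    (hred : Reduced p (u₁ ++ s :: (u₂ ++ s :: u₃)))
    (hcons : s ∉ u₂)
    (hst : Adj s t)
    (hall : ∀ g ∈ u₂, Adj g s → g = t) :
    u₂.count t = 1 ∧ (s = 0 ∨ s = Fin.last n) := by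
  exact main_aux p hn u₂.length u₁ u₂ u₃ s t le_rfl hred hcons hst hall
end

section
/- If δ = κ_L = κ_R, δ_L = δ_R = κ_{LR} = 1, and n ≥ 3 is odd, then the quotient of the presented algebra A_{n}ʹ (with generators E_0,…,E_n and the two-boundary TL relations plus topological relations) by the ideal generated by E_0 − 1 and E_n − 1 is isomorphic to the Temperley–Lieb algebra TL_n with loop parameter δ. -/
open FreeAlgebra

/-- The defining relations of the Temperley–Lieb algebra `TL` on `m` generators
`U_1, …, U_m` (indexed here by `Fin m`): `U_i² = δ U_i`, distant commutation, and
`U_i U_{i±1} U_i = U_i`. -/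
inductive TLRel (k : Type*) [CommRing k] (m : ℕ) (δ : k) :
    FreeAlgebra k (Fin m) → FreeAlgebra k (Fin m) → Prop
  | sq (i : Fin m) : TLRel k m δ (ι k i * ι k i) (δ • ι k i)
  | comm (i j : Fin m) (h : i.val + 1 < j.val) :
      TLRel k m δ (ι k i * ι k j) (ι k j * ι k i)
  | braid (i j : Fin m) (h : i.val + 1 = j.val ∨ j.val + 1 = i.val) :
      TLRel k m δ (ι k i * ι k j * ι k i) (ι k i)

/-- The Temperley–Lieb algebra `TL_n` with loop parameter `δ`
(on `n - 1` generators when `m = n - 1`). -/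
def TLAlg (k : Type*) [CommRing k] (m : ℕ) (δ : k) := RingQuot (TLRel k m δ)

noncomputable instance (k : Type*) [CommRing k] (m : ℕ) (δ : k) :
    Ring (TLAlg k m δ) := inferInstanceAs (Ring (RingQuot (TLRel k m δ)))

noncomputable instance (k : Type*) [CommRing k] (m : ℕ) (δ : k) :
    Algebra k (TLAlg k m δ) := inferInstanceAs (Algebra k (RingQuot (TLRel k m δ)))

/-- The generator `U_j` of the Temperley–Lieb algebra. -/
noncomputable def tlGen {k : Type*} [CommRing k] {m : ℕ} (δ : k) (j : Fin m) :
    TLAlg k m δ :=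
  RingQuot.mkAlgHom k (TLRel k m δ) (ι k j)

/-- The relation generating the two-sided ideal `I = (e - 1, f - 1)` of `b_n^x`. -/
def UnitQuotRel {k : Type*} [CommRing k] {n : ℕ} (p : Params k) :
    SBAlg k n p → SBAlg k n p → Prop :=
  fun x y => (x = gen p 0 ∧ y = 1) ∨ (x = gen p (Fin.last n) ∧ y = 1)

noncomputable instance {k : Type*} [CommRing k] {n : ℕ} (p : Params k) :
    Algebra k (RingQuot (UnitQuotRel (k := k) (n := n) p)) :=
  inferInstanceAs (Algebra k (RingQuot (UnitQuotRel p)))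



section MonoidLemmas
variable {M : Type*} [Monoid M]

/-- product of `U (2r), U (2(r+1)), …` of length `len` -/
def PE (U : ℕ → M) (r len : ℕ) : M := ((List.range len).map (fun t => U (2*(r+t)))).prod
/-- product of `U (2r+1), U (2(r+1)+1), …` of length `len` -/
def PO (U : ℕ → M) (r len : ℕ) : M := ((List.range len).map (fun t => U (2*(r+t)+1))).prod

lemma PE_zero (U : ℕ → M) (r : ℕ) : PE U r 0 = 1 := rfl
lemma PO_zero (U : ℕ → M) (r : ℕ) : PO U r 0 = 1 := rfl


lemma PE_succ_left (U : ℕ → M) (r len : ℕ) :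
    PE U r (len+1) = U (2*r) * PE U (r+1) len := by
  unfold PE
  rw [List.range_succ_eq_map, List.map_cons, List.prod_cons, List.map_map]
  simp only [Function.comp_apply, Nat.add_zero]
  congr 1
  apply congrArg
  apply List.map_congr_left
  intro a _
  show U (2*(r+(a+1))) = U (2*((r+1)+a))
  congr 1
  omega

lemma PO_succ_left (U : ℕ → M) (r len : ℕ) :
    PO U r (len+1) = U (2*r+1) * PO U (r+1) len := by
  unfold PO
  rw [List.range_succ_eq_map, List.map_cons, List.prod_cons, List.map_map]
  simp only [Function.comp_apply, Nat.add_zero]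
  congr 1
  apply congrArg
  apply List.map_congr_left
  intro a _
  show U (2*(r+(a+1))+1) = U (2*((r+1)+a)+1)
  congr 2
  omega

lemma PE_succ_right (U : ℕ → M) (r len : ℕ) :
    PE U r (len+1) = PE U r len * U (2*(r+len)) := by
  unfold PE
  rw [List.range_succ, List.map_append, List.prod_append]
  simp

lemma PO_succ_right (U : ℕ → M) (r len : ℕ) :
    PO U r (len+1) = PO U r len * U (2*(r+len)+1) := by
  unfold PO
  rw [List.range_succ, List.map_append, List.prod_append]
  simp

lemma PE_one (U : ℕ → M) (r : ℕ) : PE U r 1 = U (2*r) := by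
  rw [PE_succ_right U r 0, PE_zero, one_mul]
  norm_num

lemma PO_one (U : ℕ → M) (r : ℕ) : PO U r 1 = U (2*r+1) := by
  rw [PO_succ_right U r 0, PO_zero, one_mul]
  norm_num

lemma commute_PE (U : ℕ → M) (c : M) (r len : ℕ)
    (h : ∀ t, t < len → Commute c (U (2*(r+t)))) : Commute c (PE U r len) := by
  apply Commute.list_prod_right
  intro x hx
  simp only [List.mem_map, List.mem_range] at hx
  obtain ⟨t, ht, rfl⟩ := hx
  exact h t ht

lemma commute_PO (U : ℕ → M) (c : M) (r len : ℕ)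
    (h : ∀ t, t < len → Commute c (U (2*(r+t)+1))) : Commute c (PO U r len) := by
  apply Commute.list_prod_right
  intro x hx
  simp only [List.mem_map, List.mem_range] at hx
  obtain ⟨t, ht, rfl⟩ := hx
  exact h t ht

lemma key1 (a b c X Y Z : M)
    (hZ : Z = b * X) (hXc : X * c = c * X) (haX : a * X = X * a) (haY : a * Y = Y * a)
    (hab : a * b = b * a) (haca : a * c * a = a) (hIH : Z * Y * Z = Z) :
    (a * Z) * (c * Y) * (a * Z) = a * Z := by
  subst hZ
  have hXc' : ∀ w, X * (c * w) = c * (X * w) := fun w => by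
    rw [← mul_assoc, hXc, mul_assoc]
  have haX' : ∀ w, X * (a * w) = a * (X * w) := fun w => by
    rw [← mul_assoc, ← haX, mul_assoc]
  have haY' : ∀ w, Y * (a * w) = a * (Y * w) := fun w => by
    rw [← mul_assoc, ← haY, mul_assoc]
  have hhead : ∀ w, a * (b * (c * (a * w))) = a * (b * w) := by
    intro w
    calc a * (b * (c * (a * w))) = ((a * b) * c * a) * w := by simp only [mul_assoc]
      _ = ((b * a) * c * a) * w := by rw [hab]
      _ = (b * (a * c * a)) * w := by simp only [mul_assoc]
      _ = (b * a) * w := by rw [haca]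
      _ = (a * b) * w := by rw [hab]
      _ = a * (b * w) := by simp only [mul_assoc]
  have hIH' : b * (X * (Y * (b * X))) = b * X := by
    simpa only [mul_assoc] using hIH
  calc (a * (b * X)) * (c * Y) * (a * (b * X))
      = a * (b * (X * (c * (Y * (a * (b * X)))))) := by simp only [mul_assoc]
    _ = a * (b * (c * (X * (Y * (a * (b * X)))))) := by rw [hXc']
    _ = a * (b * (c * (X * (a * (Y * (b * X)))))) := by rw [haY']
    _ = a * (b * (c * (a * (X * (Y * (b * X))))))  := by rw [haX']
    _ = a * (b * (X * (Y * (b * X)))) := hhead _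
    _ = a * (b * X) := by rw [hIH']

lemma key2 (P' c d e Q : M)
    (hdQ : d * Q = Q * d) (heP : e * P' = P' * e) (hdP : d * P' = P' * d)
    (hcd : c * d = d * c) (hded : d * e * d = d)
    (hIH : (P' * c) * Q * (P' * c) = P' * c) :
    ((P' * c) * d) * (Q * e) * ((P' * c) * d) = (P' * c) * d := by
  have hdQ' : ∀ w, d * (Q * w) = Q * (d * w) := fun w => by
    rw [← mul_assoc, hdQ, mul_assoc]
  have heP' : ∀ w, e * (P' * w) = P' * (e * w) := fun w => by
    rw [← mul_assoc, heP, mul_assoc]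
  have hdP' : ∀ w, d * (P' * w) = P' * (d * w) := fun w => by
    rw [← mul_assoc, hdP, mul_assoc]
  have hded' : ∀ w, d * (e * (d * w)) = d * w := fun w => by
    calc d * (e * (d * w)) = (d * e * d) * w := by simp only [mul_assoc]
      _ = d * w := by rw [hded]
  calc ((P' * c) * d) * (Q * e) * ((P' * c) * d)
      = P' * (c * (d * (Q * (e * (P' * (c * d)))))) := by simp only [mul_assoc]
    _ = P' * (c * (Q * (d * (e * (P' * (c * d)))))) := by rw [hdQ']
    _ = P' * (c * (Q * (d * (P' * (e * (c * d)))))) := by rw [heP']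
    _ = P' * (c * (Q * (P' * (d * (e * (c * d)))))) := by rw [hdP']
    _ = P' * (c * (Q * (P' * (d * (e * (d * c)))))) := by rw [hcd]
    _ = P' * (c * (Q * (P' * (d * c)))) := by rw [hded']
    _ = P' * (c * (Q * (P' * (c * d)))) := by rw [← hcd]
    _ = ((P' * c) * Q * (P' * c)) * d := by simp only [mul_assoc]
    _ = (P' * c) * d := by rw [hIH]

lemma ABA (U : ℕ → M) (N : ℕ)
    (hcomm : ∀ i j, i + 1 < j → j < N → Commute (U i) (U j))
    (hb1 : ∀ i, i + 1 < N → U i * U (i+1) * U i = U i) :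
    ∀ len r, 2 * (r + len) ≤ N → PE U r len * PO U r len * PE U r len = PE U r len := by
  intro len
  induction len using Nat.strong_induction_on with
  | _ len ih =>
    match len with
    | 0 => intro r _; simp [PE_zero, PO_zero]
    | 1 =>
      intro r h
      rw [PE_one, PO_one]
      exact hb1 (2*r) (by omega)
    | (len+2) =>
      intro r h
      have hPE : PE U r (len+2) = U (2*r) * PE U (r+1) (len+1) := PE_succ_left U r (len+1)
      have hPO : PO U r (len+2) = U (2*r+1) * PO U (r+1) (len+1) := PO_succ_left U r (len+1)
      have hZ : PE U (r+1) (len+1) = U (2*(r+1)) * PE U (r+2) len := PE_succ_left U (r+1) len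
      rw [hPE, hPO]
      apply key1 (U (2*r)) (U (2*(r+1))) (U (2*r+1)) (PE U (r+2) len)
        (PO U (r+1) (len+1)) (PE U (r+1) (len+1)) hZ
      · exact ((commute_PE U (U (2*r+1)) (r+2) len (fun t ht =>
          hcomm (2*r+1) (2*((r+2)+t)) (by omega) (by omega))).symm).eq
      · exact ((commute_PE U (U (2*r)) (r+2) len (fun t ht =>
          hcomm (2*r) (2*((r+2)+t)) (by omega) (by omega))).eq)
      · exact ((commute_PO U (U (2*r)) (r+1) (len+1) (fun t ht =>
          hcomm (2*r) (2*((r+1)+t)+1) (by omega) (by omega))).eq)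
      · exact (hcomm (2*r) (2*(r+1)) (by omega) (by omega)).eq
      · exact hb1 (2*r) (by omega)
      · exact ih (len+1) (by omega) (r+1) (by omega)

lemma BAB (U : ℕ → M) (N : ℕ)
    (hcomm : ∀ i j, i + 1 < j → j < N → Commute (U i) (U j))
    (hb2 : ∀ i, i + 1 < N → U (i+1) * U i * U (i+1) = U (i+1)) :
    ∀ len r, 2 * (r + len) ≤ N → PO U r len * PE U r len * PO U r len = PO U r len := by
  intro len
  induction len using Nat.strong_induction_on with
  | _ len ih =>
    match len with
    | 0 => intro r _; simp [PE_zero, PO_zero]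
    | 1 =>
      intro r h
      rw [PE_one, PO_one]
      exact hb2 (2*r) (by omega)
    | (len+2) =>
      intro r h
      have hPO2 : PO U r (len+2) = PO U r (len+1) * U (2*(r+(len+1))+1) :=
        PO_succ_right U r (len+1)
      have hPE2 : PE U r (len+2) = PE U r (len+1) * U (2*(r+(len+1))) :=
        PE_succ_right U r (len+1)
      have hP : PO U r (len+1) = PO U r len * U (2*(r+len)+1) := PO_succ_right U r len
      rw [hPO2, hPE2, hP]
      apply key2 (PO U r len) (U (2*(r+len)+1)) (U (2*(r+(len+1))+1)) (U (2*(r+(len+1))))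
        (PE U r (len+1))
      · exact ((commute_PE U (U (2*(r+(len+1))+1)) r (len+1) (fun t ht =>
          (hcomm (2*(r+t)) (2*(r+(len+1))+1) (by omega) (by omega)).symm)).eq)
      · exact ((commute_PO U (U (2*(r+(len+1)))) r len (fun t ht =>
          (hcomm (2*(r+t)+1) (2*(r+(len+1))) (by omega) (by omega)).symm)).eq)
      · exact ((commute_PO U (U (2*(r+(len+1))+1)) r len (fun t ht =>
          (hcomm (2*(r+t)+1) (2*(r+(len+1))+1) (by omega) (by omega)).symm)).eq)
      · exact (hcomm (2*(r+len)+1) (2*(r+(len+1))+1) (by omega) (by omega)).eq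
      · exact hb2 (2*(r+(len+1))) (by omega)
      · rw [← hP]; exact ih (len+1) (by omega) r (by omega)

end MonoidLemmas
-- TL side lemmas
section TLSide
variable {k : Type*} [CommRing k]

/-- `ℕ`-indexed Temperley–Lieb generators (with junk value `1` out of range). -/
noncomputable def tl (m : ℕ) (δ : k) (j : ℕ) : TLAlg k m δ :=
  if h : j < m then tlGen δ ⟨j, h⟩ else 1

lemma tl_comm (m : ℕ) (δ : k) (i j : ℕ) (hij : i + 1 < j) (hj : j < m) :
    Commute (tl m δ i) (tl m δ j) := by
  have hi : i < m := by omega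
  rw [tl, tl, dif_pos hi, dif_pos hj]
  have := RingQuot.mkAlgHom_rel k (TLRel.comm (k := k) (δ := δ) ⟨i, hi⟩ ⟨j, hj⟩ hij)
  simp only [map_mul] at this
  exact this

lemma tl_sq (m : ℕ) (δ : k) (i : ℕ) (hi : i < m) :
    tl m δ i * tl m δ i = δ • tl m δ i := by
  rw [tl, dif_pos hi]
  have := RingQuot.mkAlgHom_rel k (TLRel.sq (k := k) (δ := δ) ⟨i, hi⟩)
  simp only [map_mul, map_smul] at this
  exact this

lemma tl_b1 (m : ℕ) (δ : k) (i : ℕ) (hi : i + 1 < m) :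
    tl m δ i * tl m δ (i+1) * tl m δ i = tl m δ i := by
  have hi' : i < m := by omega
  rw [tl, tl, dif_pos hi', dif_pos hi]
  have := RingQuot.mkAlgHom_rel k
    (TLRel.braid (k := k) (δ := δ) ⟨i, hi'⟩ ⟨i+1, hi⟩ (Or.inl rfl))
  simp only [map_mul] at this
  exact this

lemma tl_b2 (m : ℕ) (δ : k) (i : ℕ) (hi : i + 1 < m) :
    tl m δ (i+1) * tl m δ i * tl m δ (i+1) = tl m δ (i+1) := by
  have hi' : i < m := by omega
  rw [tl, tl, dif_pos hi', dif_pos hi]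
  have := RingQuot.mkAlgHom_rel k
    (TLRel.braid (k := k) (δ := δ) ⟨i+1, hi⟩ ⟨i, hi'⟩ (Or.inr rfl))
  simp only [map_mul] at this
  exact this

end TLSide
section Words
variable {k : Type*} [CommRing k]

/-- value-level version of the generator assignment -/
noncomputable def gv (n : ℕ) (δ : k) (v : ℕ) : TLAlg k (n-1) δ :=
  if 1 ≤ v ∧ v < n then tl (n-1) δ (v-1) else 1

/-- assignment of generators of the free algebra -/
noncomputable def gmap (n : ℕ) (δ : k) (i : Fin (n+1)) : TLAlg k (n-1) δ := gv n δ i.val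

noncomputable def fHom (n : ℕ) (δ : k) :
    FreeAlgebra k (Fin (n+1)) →ₐ[k] TLAlg k (n-1) δ :=
  FreeAlgebra.lift k (gmap n δ)

lemma fHom_ι (n : ℕ) (δ : k) (i : Fin (n+1)) : fHom n δ (ι k i) = gmap n δ i := by
  simp [fHom, FreeAlgebra.lift_ι_apply]

lemma fHom_word (n : ℕ) (δ : k) (u : List (Fin (n+1))) :
    fHom n δ (wordProd k u) = (u.map (gmap n δ)).prod := by
  unfold wordProd
  rw [map_list_prod, List.map_map]
  congr 1
  apply List.map_congr_left
  intro a _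
  exact fHom_ι n δ a

lemma map_val_filter {N : ℕ} (p : ℕ → Bool) (l : List (Fin N)) :
    (l.filter (fun i => p i.val)).map Fin.val = (l.map Fin.val).filter p := by
  induction l with
  | nil => rfl
  | cons x xs ih =>
    by_cases h : p x.val
    · simp [List.filter_cons, h, ih]
    · simp [List.filter_cons, h, ih]

lemma Iword_val (n : ℕ) :
    (Iword n).map Fin.val = (List.range (n+1)).filter (fun v => v % 2 = 1) := by
  unfold Iword
  rw [show List.range (n+1) = (List.finRange (n+1)).map Fin.val from
    List.ext_getElem (by simp) (by simp)]
  exact map_val_filter (fun v => decide (v % 2 = 1)) _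

lemma Jword_val (n : ℕ) :
    (Jword n).map Fin.val = (List.range (n+1)).filter (fun v => v % 2 = 0) := by
  unfold Jword
  rw [show List.range (n+1) = (List.finRange (n+1)).map Fin.val from
    List.ext_getElem (by simp) (by simp)]
  exact map_val_filter (fun v => decide (v % 2 = 0)) _

lemma range_filter_odd (q : ℕ) :
    (List.range (2*q)).filter (fun v => v % 2 = 1) = (List.range q).map (fun a => 2*a+1) := by
  induction q with
  | zero => rfl
  | succ q ih =>
    have h2 : 2*(q+1) = (2*q+1)+1 := by ring
    have e0 : (2*q) % 2 = 0 := by omega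
    have e1 : (2*q+1) % 2 = 1 := by omega
    rw [h2, List.range_succ, List.range_succ, List.filter_append, List.filter_append, ih,
      List.range_succ, List.map_append]
    simp [List.filter_cons, e0, e1]

lemma range_filter_even (q : ℕ) :
    (List.range (2*q)).filter (fun v => v % 2 = 0) = (List.range q).map (fun a => 2*a) := by
  induction q with
  | zero => rfl
  | succ q ih =>
    have h2 : 2*(q+1) = (2*q+1)+1 := by ring
    have e0 : (2*q) % 2 = 0 := by omega
    have e1 : (2*q+1) % 2 = 1 := by omega
    rw [h2, List.range_succ, List.range_succ, List.filter_append, List.filter_append, ih,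
      List.range_succ, List.map_append]
    simp [List.filter_cons, e0, e1]

end Words
section ImageWords
variable {k : Type*} [CommRing k]

lemma prod_Iword (n : ℕ) (δ : k) (p' : ℕ) (hp : n = 2*p'+1) :
    ((Iword n).map (gmap n δ)).prod = PE (tl (n-1) δ) 0 p' := by
  have h1 : (Iword n).map (gmap n δ) = ((Iword n).map Fin.val).map (gv n δ) := by
    rw [List.map_map]; rfl
  rw [h1, Iword_val, show n+1 = 2*(p'+1) by omega, range_filter_odd, List.map_map,
    List.range_succ, List.map_append, List.prod_append]
  have hlast : ((gv n δ) ∘ (fun a => 2*a+1)) p' = 1 := by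
    show gv n δ (2*p'+1) = 1
    rw [gv, if_neg (by omega)]
  rw [List.map_singleton, hlast, List.prod_singleton, mul_one]
  unfold PE
  congr 1
  apply List.map_congr_left
  intro a ha
  rw [List.mem_range] at ha
  show gv n δ (2*a+1) = tl (n-1) δ (2*(0+a))
  rw [gv, if_pos (by constructor <;> omega)]
  congr 1
  omega

lemma prod_Jword (n : ℕ) (δ : k) (p' : ℕ) (hp : n = 2*p'+1) :
    ((Jword n).map (gmap n δ)).prod = PO (tl (n-1) δ) 0 p' := by
  have h1 : (Jword n).map (gmap n δ) = ((Jword n).map Fin.val).map (gv n δ) := by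
    rw [List.map_map]; rfl
  rw [h1, Jword_val, show n+1 = 2*(p'+1) by omega, range_filter_even, List.map_map,
    List.range_succ_eq_map, List.map_cons, List.prod_cons, List.map_map]
  have hhead : ((gv n δ) ∘ (fun a => 2*a)) 0 = 1 := by
    show gv n δ (2*0) = 1
    rw [gv, if_neg (by omega)]
  rw [hhead, one_mul]
  unfold PO
  congr 1
  apply List.map_congr_left
  intro a ha
  rw [List.mem_range] at ha
  show gv n δ (2*(a+1)) = tl (n-1) δ (2*(0+a)+1)
  rw [gv, if_pos (by constructor <;> omega)]
  congr 1
  omega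

lemma fHom_rel (n : ℕ) (δ : k) (hn : 3 ≤ n) (hodd : Odd n) :
    ∀ ⦃x y : FreeAlgebra k (Fin (n+1))⦄,
      SBRel (⟨δ, 1, 1, δ, δ, 1⟩ : Params k) x y → fHom n δ x = fHom n δ y := by
  intro x y hrel
  obtain ⟨p', hp⟩ : ∃ p', n = 2*p'+1 := by
    obtain ⟨t, ht⟩ := hodd; exact ⟨t, by omega⟩
  cases hrel with
  | comm i j h =>
    simp only [map_mul, fHom_ι, gmap]
    by_cases hi1 : 1 ≤ i.val ∧ i.val < n
    · by_cases hj1 : 1 ≤ j.val ∧ j.val < n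
      · rw [gv, gv, if_pos hi1, if_pos hj1]
        exact (tl_comm (n-1) δ (i.val-1) (j.val-1) (by omega) (by omega)).eq
      · rw [gv, gv, if_pos hi1, if_neg hj1, mul_one, one_mul]
    · rw [gv, if_neg hi1, mul_one, one_mul]
  | left_sq =>
    simp only [map_mul, map_smul, fHom_ι, gmap]
    have h0 : ((0 : Fin (n+1)) : ℕ) = 0 := rfl
    rw [h0, gv, if_neg (by omega)]
    show (1 : TLAlg k (n-1) δ) * 1 = (1:k) • 1
    rw [one_mul, one_smul]
  | right_sq =>
    simp only [map_mul, map_smul, fHom_ι, gmap]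
    have h0 : ((Fin.last n : Fin (n+1)) : ℕ) = n := rfl
    rw [h0, gv, if_neg (by omega)]
    show (1 : TLAlg k (n-1) δ) * 1 = (1:k) • 1
    rw [one_mul, one_smul]
  | mid_sq i h1 h2 =>
    simp only [map_mul, map_smul, fHom_ι, gmap]
    rw [gv, if_pos ⟨h1, h2⟩]
    show _ = δ • _
    exact tl_sq (n-1) δ (i.val-1) (by omega)
  | left_braid i j hi hj =>
    simp only [map_mul, map_smul, fHom_ι, gmap, hi, hj]
    rw [gv, gv, if_pos (by omega), if_neg (by omega), mul_one]
    show tl (n-1) δ (1-1) * tl (n-1) δ (1-1) = δ • tl (n-1) δ (1-1)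
    exact tl_sq (n-1) δ 0 (by omega)
  | right_braid i j hi hj =>
    simp only [map_mul, map_smul, fHom_ι, gmap, hj]
    rw [gv, gv, if_pos (by omega), if_neg (by omega), mul_one]
    show _ = δ • _
    exact tl_sq (n-1) δ (i.val-1) (by omega)
  | braid_up i j h h1 h2 =>
    simp only [map_mul, fHom_ι, gmap]
    rw [gv, gv, if_pos (by constructor <;> omega), if_pos (by constructor <;> omega)]
    have hj1 : j.val - 1 = (i.val - 1) + 1 := by omega
    rw [hj1]
    exact tl_b1 (n-1) δ (i.val-1) (by omega)
  | braid_down i j h h1 h2 =>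
    simp only [map_mul, fHom_ι, gmap]
    rw [gv, gv, if_pos (by constructor <;> omega), if_pos (by constructor <;> omega)]
    have hj1 : j.val - 1 = (i.val - 1) + 1 := by omega
    rw [hj1]
    exact tl_b2 (n-1) δ (i.val-1) (by omega)
  | topI =>
    rw [map_smul, fHom_word, fHom_word, List.map_append, List.map_append,
      List.prod_append, List.prod_append, prod_Iword n δ p' hp, prod_Jword n δ p' hp]
    show _ = (1:k) • _
    rw [one_smul]
    exact ABA (tl (n-1) δ) (n-1) (fun i j h1 h2 => tl_comm (n-1) δ i j h1 h2)
      (fun i h => tl_b1 (n-1) δ i h) p' 0 (by omega)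
  | topJ =>
    rw [map_smul, fHom_word, fHom_word, List.map_append, List.map_append,
      List.prod_append, List.prod_append, prod_Iword n δ p' hp, prod_Jword n δ p' hp]
    show _ = (1:k) • _
    rw [one_smul]
    exact BAB (tl (n-1) δ) (n-1) (fun i j h1 h2 => tl_comm (n-1) δ i j h1 h2)
      (fun i h => tl_b2 (n-1) δ i h) p' 0 (by omega)

end ImageWords
section Assemble
variable {k : Type*} [CommRing k]

/-- first stage of the forward map -/
noncomputable def Phi0 (n : ℕ) (δ : k) (hn : 3 ≤ n) (hodd : Odd n) :
    SBAlg k n (⟨δ, 1, 1, δ, δ, 1⟩ : Params k) →ₐ[k] TLAlg k (n-1) δ :=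
  RingQuot.liftAlgHom k ⟨fHom n δ, fHom_rel n δ hn hodd⟩

lemma Phi0_mk (n : ℕ) (δ : k) (hn : 3 ≤ n) (hodd : Odd n)
    (x : FreeAlgebra k (Fin (n+1))) :
    Phi0 n δ hn hodd (RingQuot.mkAlgHom k (SBRel (⟨δ, 1, 1, δ, δ, 1⟩ : Params k)) x)
      = fHom n δ x :=
  RingQuot.liftAlgHom_mkAlgHom_apply k _ _ x

lemma gv_zero (n : ℕ) (δ : k) : gv n δ 0 = 1 := by rw [gv, if_neg (by omega)]
lemma gv_n (n : ℕ) (δ : k) : gv n δ n = 1 := by rw [gv, if_neg (by omega)]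

/-- the forward map -/
noncomputable def Phi (n : ℕ) (δ : k) (hn : 3 ≤ n) (hodd : Odd n) :
    RingQuot (UnitQuotRel (k := k) (n := n) (⟨δ, 1, 1, δ, δ, 1⟩ : Params k)) →ₐ[k] TLAlg k (n-1) δ :=
  RingQuot.liftAlgHom k ⟨Phi0 n δ hn hodd, by
    rintro x y (⟨rfl, rfl⟩ | ⟨rfl, rfl⟩)
    · rw [map_one]
      show Phi0 n δ hn hodd (RingQuot.mkAlgHom k _ (ι k 0)) = 1
      rw [Phi0_mk, fHom_ι]
      show gv n δ (0 : Fin (n+1)).val = 1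
      have h0 : ((0 : Fin (n+1)) : ℕ) = 0 := rfl
      rw [h0, gv_zero]
    · rw [map_one]
      show Phi0 n δ hn hodd (RingQuot.mkAlgHom k _ (ι k (Fin.last n))) = 1
      rw [Phi0_mk, fHom_ι]
      show gv n δ (Fin.last n).val = 1
      have h0 : ((Fin.last n : Fin (n+1)) : ℕ) = n := rfl
      rw [h0, gv_n]⟩

/-- free stage of the backward map -/
noncomputable def gHom (n : ℕ) (δ : k) :
    FreeAlgebra k (Fin (n-1)) →ₐ[k]
      RingQuot (UnitQuotRel (k := k) (n := n) (⟨δ, 1, 1, δ, δ, 1⟩ : Params k)) :=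
  FreeAlgebra.lift k (fun j =>
    RingQuot.mkAlgHom k (UnitQuotRel (k := k) (n := n) (⟨δ, 1, 1, δ, δ, 1⟩ : Params k))
      (gen (⟨δ, 1, 1, δ, δ, 1⟩ : Params k) ⟨j.val + 1, by have := j.isLt; omega⟩))

lemma gHom_rel (n : ℕ) (δ : k) (hn : 3 ≤ n) :
    ∀ ⦃x y : FreeAlgebra k (Fin (n-1))⦄, TLRel k (n-1) δ x y →
      gHom n δ x = gHom n δ y := by
  intro x y hrel
  set p : Params k := (⟨δ, 1, 1, δ, δ, 1⟩ : Params k) with hpdef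
  have push : ∀ {u v : FreeAlgebra k (Fin (n+1))}, SBRel p u v →
      RingQuot.mkAlgHom k (UnitQuotRel (k := k) (n := n) p)
          (RingQuot.mkAlgHom k (SBRel p) u)
        = RingQuot.mkAlgHom k (UnitQuotRel (k := k) (n := n) p)
          (RingQuot.mkAlgHom k (SBRel p) v) :=
    fun h => congrArg _ (RingQuot.mkAlgHom_rel k h)
  cases hrel with
  | sq i =>
    have hb : i.val + 1 < n + 1 := by have := i.isLt; omega
    have h := push (SBRel.mid_sq (p := p) ⟨i.val + 1, hb⟩ (by show 1 ≤ i.val + 1; omega)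
      (by show i.val + 1 < n; have := i.isLt; omega))
    simp only [map_mul, map_smul] at h
    simp only [map_mul, map_smul, FreeAlgebra.lift_ι_apply, gHom, gen]
    erw [map_mul, map_smul] at h
    exact h
  | comm i j h =>
    have hbi : i.val + 1 < n + 1 := by have := i.isLt; omega
    have hbj : j.val + 1 < n + 1 := by have := j.isLt; omega
    have h2 := push (SBRel.comm (p := p) ⟨i.val + 1, hbi⟩ ⟨j.val + 1, hbj⟩
      (by show i.val + 1 + 1 < j.val + 1; omega))
    simp only [map_mul] at h2
    simp only [map_mul, FreeAlgebra.lift_ι_apply, gHom, gen]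
    erw [map_mul, map_mul] at h2
    exact h2
  | braid i j h =>
    have hbi : i.val + 1 < n + 1 := by have := i.isLt; omega
    have hbj : j.val + 1 < n + 1 := by have := j.isLt; omega
    rcases h with h | h
    · have h2 := push (SBRel.braid_up (p := p) ⟨i.val + 1, hbi⟩ ⟨j.val + 1, hbj⟩
        (by show i.val + 1 + 1 = j.val + 1; omega) (by show 1 ≤ i.val + 1; omega)
        (by show j.val + 1 < n; have := j.isLt; omega))
      simp only [map_mul] at h2
      simp only [map_mul, FreeAlgebra.lift_ι_apply, gHom, gen]
      erw [map_mul, map_mul] at h2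
      exact h2
    · have h2 := push (SBRel.braid_down (p := p) ⟨j.val + 1, hbj⟩ ⟨i.val + 1, hbi⟩
        (by show j.val + 1 + 1 = i.val + 1; omega) (by show 1 ≤ j.val + 1; omega)
        (by show i.val + 1 < n; have := i.isLt; omega))
      simp only [map_mul] at h2
      simp only [map_mul, FreeAlgebra.lift_ι_apply, gHom, gen]
      erw [map_mul, map_mul] at h2
      exact h2

/-- the backward map -/
noncomputable def Psi (n : ℕ) (δ : k) (hn : 3 ≤ n) :
    TLAlg k (n-1) δ →ₐ[k]
      RingQuot (UnitQuotRel (k := k) (n := n) (⟨δ, 1, 1, δ, δ, 1⟩ : Params k)) :=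
  RingQuot.liftAlgHom k ⟨gHom n δ, gHom_rel n δ hn⟩

end Assemble
section Final
variable {k : Type*} [CommRing k]

lemma Phi_mk (n : ℕ) (δ : k) (hn : 3 ≤ n) (hodd : Odd n)
    (z : SBAlg k n (⟨δ, 1, 1, δ, δ, 1⟩ : Params k)) :
    Phi n δ hn hodd
      (RingQuot.mkAlgHom k (UnitQuotRel (k := k) (n := n) (⟨δ, 1, 1, δ, δ, 1⟩ : Params k)) z)
      = Phi0 n δ hn hodd z :=
  RingQuot.liftAlgHom_mkAlgHom_apply k _ _ z

lemma Psi_mk (n : ℕ) (δ : k) (hn : 3 ≤ n) (x : FreeAlgebra k (Fin (n-1))) :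
    Psi n δ hn (RingQuot.mkAlgHom k (TLRel k (n-1) δ) x) = gHom n δ x :=
  RingQuot.liftAlgHom_mkAlgHom_apply k _ _ x

end Final

theorem quotient_iso_TL' {k : Type*} [CommRing k] (n : ℕ) (hn : 3 ≤ n) (hodd : Odd n)
    (δ : k) :
    Nonempty
      (RingQuot (UnitQuotRel (k := k) (n := n) (⟨δ, 1, 1, δ, δ, 1⟩ : Params k)) ≃ₐ[k]
        TLAlg k (n - 1) δ) := by
  refine ⟨AlgEquiv.ofAlgHom (Phi n δ hn hodd) (Psi n δ hn) ?_ ?_⟩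
  · -- Phi ∘ Psi = id on TL
    apply RingQuot.ringQuot_ext'
    apply FreeAlgebra.hom_ext
    funext j
    simp only [Function.comp_apply, AlgHom.coe_comp, AlgHom.id_apply]
    refine (congrArg (Phi n δ hn hodd) (Psi_mk n δ hn (ι k j))).trans ?_
    simp only [gHom, FreeAlgebra.lift_ι_apply]
    refine (Phi_mk n δ hn hodd _).trans ?_
    refine (Phi0_mk n δ hn hodd
      (ι k (⟨j.val + 1, by have := j.isLt; omega⟩ : Fin (n+1)))).trans ?_
    refine (fHom_ι n δ _).trans ?_
    show gv n δ (j.val + 1) = _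
    have hj := j.isLt
    rw [gv, if_pos (by constructor <;> omega)]
    rw [tl, dif_pos (show j.val + 1 - 1 < n - 1 by omega)]
    have he : (⟨j.val + 1 - 1, show j.val + 1 - 1 < n - 1 by omega⟩ : Fin (n-1)) = j :=
      Fin.ext (by simp)
    rw [he]
    rfl
  · -- Psi ∘ Phi = id on the quotient
    apply RingQuot.ringQuot_ext'
    apply RingQuot.ringQuot_ext'
    apply FreeAlgebra.hom_ext
    funext i
    simp only [Function.comp_apply, AlgHom.coe_comp, AlgHom.id_apply]
    refine (congrArg (Psi n δ hn)
      ((Phi_mk n δ hn hodd _).trans ((Phi0_mk n δ hn hodd (ι k i)).trans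
        (fHom_ι n δ i)))).trans ?_
    show Psi n δ hn (gv n δ i.val) = _
    by_cases hi : 1 ≤ i.val ∧ i.val < n
    · rw [gv, if_pos hi, tl, dif_pos (show i.val - 1 < n - 1 by omega)]
      refine (Psi_mk n δ hn
        (ι k (⟨i.val - 1, show i.val - 1 < n - 1 by omega⟩ : Fin (n-1)))).trans ?_
      simp only [gHom, FreeAlgebra.lift_ι_apply]
      have he : ∀ (h2 : (⟨i.val - 1, show i.val - 1 < n - 1 by omega⟩ : Fin (n-1)).val + 1 < n + 1),
          (⟨(⟨i.val - 1, show i.val - 1 < n - 1 by omega⟩ : Fin (n-1)).val + 1, h2⟩ : Fin (n+1)) = i :=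
        fun h2 => Fin.ext (by simp; omega)
      rw [he]
      rfl
    · rw [gv, if_neg hi, map_one]
      rcases (by have := i.isLt; omega : i.val = 0 ∨ i.val = n) with h0 | h0
      · have hi0 : i = 0 := Fin.ext (by simpa using h0)
        subst hi0
        have hrel : UnitQuotRel (k := k) (n := n) (⟨δ, 1, 1, δ, δ, 1⟩ : Params k)
            (gen (⟨δ, 1, 1, δ, δ, 1⟩ : Params k) 0) 1 := Or.inl ⟨rfl, rfl⟩
        have h2 := RingQuot.mkAlgHom_rel k hrel
        rw [map_one] at h2
        exact h2.symm
      · have hi0 : i = Fin.last n := Fin.ext (by simpa using h0)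
        subst hi0
        have hrel : UnitQuotRel (k := k) (n := n) (⟨δ, 1, 1, δ, δ, 1⟩ : Params k)
            (gen (⟨δ, 1, 1, δ, δ, 1⟩ : Params k) (Fin.last n)) 1 := Or.inr ⟨rfl, rfl⟩
        have h2 := RingQuot.mkAlgHom_rel k hrel
        rw [map_one] at h2
        exact h2.symm

/-- If `δ = κ_L = κ_R`, `δ_L = δ_R = κ_{LR} = 1` and `n ≥ 3` is odd, then
`b_n^x / I ≅ TL_n`, where `I` is the ideal generated by `e - 1` and `f - 1` and `TL_n`
has loop parameter `δ` (with `q + q⁻¹ = δ`). -/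
theorem quotient_iso_TL {k : Type*} [Field k] (n : ℕ) (hn : 3 ≤ n) (hodd : Odd n)
    (δ : k) :
    Nonempty
      (RingQuot (UnitQuotRel (k := k) (n := n) (⟨δ, 1, 1, δ, δ, 1⟩ : Params k)) ≃ₐ[k]
        TLAlg k (n - 1) δ) := by
  exact quotient_iso_TL' n hn hodd δ
end
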